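/- In a cylindrical semi-bar k-visibility representation with injective lengths, any 2k+2 bars whose lengths are the 2k+2 largest are pairwise adjacent, i.e., the 2k+2 longest semi-bars form a clique. -/

import Mathlib

open Finset
open scoped Classical

variable {n : ℕ}

/-- The open cyclic arc from `i` to `j` (going in the positive direction), excluding both. -/
def Arc [NeZero n] (i j : ZMod n) : Finset (ZMod n) :=
  univ.filter fun t => 0 < (t - i).val ∧ (t - i).val < (j - i).val

/-- Number of bars on the open arc from `i` to `j` strictly longer than the shorter of `i, j`. -/
noncomputable def exceedCount [NeZero n] (ℓ : ZMod n → ℝ) (i j : ZMod n) : ℕ :=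
  ((Arc i j).filter fun t => min (ℓ i) (ℓ j) < ℓ t).card

/-- The cylindrical semi-bar `k`-visibility graph: `i ≠ j` are adjacent iff on one of the two
open cyclic arcs between them at most `k` bars are longer than `min (ℓ i) (ℓ j)`. -/
noncomputable def CylGraph (k : ℕ) [NeZero n] (ℓ : ZMod n → ℝ) : SimpleGraph (ZMod n) where
  Adj i j := i ≠ j ∧ (exceedCount ℓ i j ≤ k ∨ exceedCount ℓ j i ≤ k)
  symm := ⟨fun i j h => ⟨h.1.symm, h.2.symm⟩⟩
  loopless := ⟨fun i h => h.1 rfl⟩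

noncomputable instance (k : ℕ) [NeZero n] (ℓ : ZMod n → ℝ) :
    DecidableRel (CylGraph k ℓ).Adj := Classical.decRel _

/-- For `t ∉ {i, j}` with `i ≠ j`, `t` lies on exactly one of the two open arcs. -/
lemma arc_partition [NeZero n] {i j : ZMod n} (hij : i ≠ j) (t : ZMod n)
    (hti : t ≠ i) (htj : t ≠ j) : (t ∈ Arc i j ∧ t ∉ Arc j i) ∨ (t ∉ Arc i j ∧ t ∈ Arc j i) := by
  have ha : (t - i) ≠ 0 := sub_ne_zero.mpr hti
  have hb : (j - i) ≠ 0 := sub_ne_zero.mpr hij.symm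
  have hab : (t - i).val ≠ (j - i).val := fun h => htj (by
    have := ZMod.val_injective n h
    linear_combination this)
  set a := (t - i).val with hA
  set b := (j - i).val with hB
  have ha0 : 0 < a := Nat.pos_of_ne_zero (fun h => ha (ZMod.val_eq_zero _ |>.mp h))
  have hb0 : 0 < b := Nat.pos_of_ne_zero (fun h => hb (ZMod.val_eq_zero _ |>.mp h))
  have han : a < n := ZMod.val_lt _
  have hbn : b < n := ZMod.val_lt _
  have hij' : (i - j) = -(j - i) := by ring
  have : NeZero (j - i) := ⟨hb⟩
  have hijval : (i - j).val = n - b := by rw [hij', ZMod.val_neg_of_ne_zero]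
  rcases lt_or_gt_of_ne hab with h | h
  · -- a < b : t ∈ Arc i j, t ∉ Arc j i
    left
    have htj' : (t - j) = -((j - i) - (t - i)) := by ring
    have hd : ((j - i) - (t - i)).val = b - a := ZMod.val_sub h.le
    have hdz : (j - i) - (t - i) ≠ 0 := by
      intro hz; apply sub_ne_zero.mpr htj; linear_combination -hz
    have : NeZero ((j - i) - (t - i)) := ⟨hdz⟩
    have htjval : (t - j).val = n - (b - a) := by rw [htj', ZMod.val_neg_of_ne_zero, hd]
    constructor
    · simp [Arc, ha0, h]; exact ⟨ha, h⟩
    · simp only [Arc, mem_filter, mem_univ, true_and, htjval, hijval]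
      rintro ⟨-, h2⟩
      omega
  · -- b < a : t ∈ Arc j i
    right
    have htjval : (t - j).val = a - b := by
      have : (t - j) = (t - i) - (j - i) := by ring
      rw [this, ZMod.val_sub h.le]
    constructor
    · simp only [Arc, mem_filter, mem_univ, true_and]
      rintro ⟨-, h2⟩; omega
    · simp only [Arc, mem_filter, mem_univ, true_and, htjval, hijval]
      omega

lemma arc_self_not_left [NeZero n] (i j : ZMod n) : i ∉ Arc i j := by
  simp [Arc]

lemma arc_self_not_right [NeZero n] (i j : ZMod n) : j ∉ Arc i j := by
  simp [Arc]

/-- If `ℓ i < ℓ j` and fewer than `2k+2` bars are longer than bar `i`, then on one of the two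
arcs between `i` and `j` at most `k` bars exceed `min (ℓ i) (ℓ j) = ℓ i`. -/
lemma key [NeZero n] {k : ℕ} (ℓ : ZMod n → ℝ) {i j : ZMod n} (hij : i ≠ j)
    (hlt : ℓ i < ℓ j)
    (hcard : (univ.filter fun v => ℓ i < ℓ v).card < 2 * k + 2) :
    exceedCount ℓ i j ≤ k ∨ exceedCount ℓ j i ≤ k := by
  set S := univ.filter fun v => ℓ i < ℓ v with hS
  set A := (Arc i j).filter fun t => ℓ i < ℓ t with hA
  set B := (Arc j i).filter fun t => ℓ i < ℓ t with hB
  have hmin1 : min (ℓ i) (ℓ j) = ℓ i := min_eq_left hlt.le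
  have hmin2 : min (ℓ j) (ℓ i) = ℓ i := min_eq_right hlt.le
  have hEA : exceedCount ℓ i j = A.card := by
    simp only [exceedCount, hmin1, hA]
  have hEB : exceedCount ℓ j i = B.card := by
    simp only [exceedCount, hmin2, hB]
  have hdisj : Disjoint A B := by
    rw [disjoint_left]
    intro t htA htB
    simp only [hA, hB, mem_filter] at htA htB
    by_cases hti : t = i
    · subst hti; exact arc_self_not_left t j htA.1
    by_cases htj : t = j
    · subst htj; exact arc_self_not_left t i htB.1
    rcases arc_partition hij t hti htj with ⟨-, h⟩ | ⟨h, -⟩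
    · exact h htB.1
    · exact h htA.1
  have hsub : A ∪ B ⊆ S.erase j := by
    intro t ht
    rw [mem_erase]
    rcases mem_union.mp ht with h | h <;>
      simp only [hA, hB, mem_filter] at h
    · exact ⟨fun e => arc_self_not_right i j (e ▸ h.1), by simp [hS, h.2]⟩
    · exact ⟨fun e => arc_self_not_left j i (e ▸ h.1), by simp [hS, h.2]⟩
  have hjS : j ∈ S := by simp [hS, hlt]
  have hcardE : (S.erase j).card = S.card - 1 := card_erase_of_mem hjS
  have hsum : A.card + B.card ≤ 2 * k := by
    have := card_le_card hsub
    rw [card_union_of_disjoint hdisj] at this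
    have hSpos : 0 < S.card := card_pos.mpr ⟨j, hjS⟩
    omega
  rw [hEA, hEB]; omega

/-- in a cylindrical semi-bar `k`-visibility representation with distinct
lengths, the `2k+2` longest semi-bars are pairwise adjacent (form a clique). -/
theorem stmt15 (k : ℕ) [NeZero n] (hn : 2 * k + 2 ≤ n) (ℓ : ZMod n → ℝ)
    (hinj : Function.Injective ℓ) :
    ∀ i j : ZMod n, i ≠ j →
      (univ.filter fun v => ℓ i < ℓ v).card < 2 * k + 2 →
      (univ.filter fun v => ℓ j < ℓ v).card < 2 * k + 2 →
      (CylGraph k ℓ).Adj i j := by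
  intro i j hij hi hj
  have hne : ℓ i ≠ ℓ j := fun h => hij (hinj h)
  refine ⟨hij, ?_⟩
  rcases lt_or_gt_of_ne hne with h | h
  · exact key ℓ hij h hi
  · exact (key ℓ hij.symm h hj).symm
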